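/- (Claim in the proof of Theorem 3.5.) For every edge e ∈ spine1(e1*), every adjacent superior of e in G that is not an adjacent superior of e in G1 belongs to spine2(e2*). Symmetrically, for e ∈ spine2(e2*), every adjacent superior of e in G that is not an adjacent superior of e in G2 belongs to spine1(e1*). -/

import Mathlib

/- Single tree setting: `G` is a finite tree with injective edge ranks `r`.
`edgesBetween G e f` is the set of edges strictly between edges `e` and `f`
on the unique tree path connecting them (an edge `g ∉ {e,f}` lies on this path
iff it belongs to every walk containing both `e` and `f`). -/

open SimpleGraph

variable {V : Type*}

/-- The set of edges lying strictly between edges `e` and `f` on the tree path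
connecting them (excluding `e` and `f`). -/
def edgesBetween (G : SimpleGraph V) (e f : Sym2 V) : Set (Sym2 V) :=
  {g | g ∈ G.edgeSet ∧ g ≠ e ∧ g ≠ f ∧
    ∀ (a b : V) (w : G.Walk a b), e ∈ w.edges → f ∈ w.edges → g ∈ w.edges}

/-- `f` is an adjacent superior of `e`: `r e < r f` and every edge `g` on the
path between `e` and `f` satisfies `r g < r e`. -/
def AdjSup (G : SimpleGraph V) (r : Sym2 V → ℕ) (e f : Sym2 V) : Prop :=
  f ∈ G.edgeSet ∧ r e < r f ∧ ∀ g ∈ edgesBetween G e f, r g < r e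

/-- `f` is an adjacent inferior of `e`: `r f < r e` and every edge `g` on the
path between `e` and `f` satisfies `r g < r e`. -/
def AdjInf (G : SimpleGraph V) (r : Sym2 V → ℕ) (e f : Sym2 V) : Prop :=
  f ∈ G.edgeSet ∧ r f < r e ∧ ∀ g ∈ edgesBetween G e f, r g < r e

/-- `f` is the SLD parent of `e`: the minimum-rank adjacent superior of `e`. -/
def IsParent (G : SimpleGraph V) (r : Sym2 V → ℕ) (e f : Sym2 V) : Prop :=
  AdjSup G r e f ∧ ∀ g, AdjSup G r e g → r f ≤ r g

/-- The spine of `e`: the set of edges obtained by iterating the SLD parent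
function starting from `e` (including `e` itself). -/
def spine (G : SimpleGraph V) (r : Sym2 V → ℕ) (e : Sym2 V) : Set (Sym2 V) :=
  {f | Relation.ReflTransGen (IsParent G r) e f}

/-! ### Auxiliary machinery for the proof -/

namespace Stmt7Proof

variable {H H1 H2 : SimpleGraph V} {g e f x y k : Sym2 V} {a b c u v : V}

/-- `g` separates edges `e` and `f` in `H`. -/
def Sep (H : SimpleGraph V) (g e f : Sym2 V) : Prop :=
  ∀ a ∈ e, ∀ b ∈ f, ¬ (H.deleteEdges {g}).Reachable a b

lemma Sep.symm (h : Sep H g e f) : Sep H g f e :=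
  fun a ha b hb hr => h b hb a ha hr.symm

lemma reach_del_of_walk {a b : V} (w : H.Walk a b) (hg : g ∉ w.edges) :
    (H.deleteEdges {g}).Reachable a b := by
  refine ⟨w.transfer _ ?_⟩
  intro e' he'
  rw [edgeSet_deleteEdges]
  exact ⟨w.edges_subset_edgeSet he', by rintro rfl; exact hg he'⟩

lemma reach_of_support [DecidableEq V] {K : SimpleGraph V} (w : K.Walk a b)
    (hx : u ∈ w.support) : K.Reachable a u := ⟨w.takeUntil u hx⟩

lemma exists_pts (hx : x ∈ H.edgeSet) : ∃ p q : V, p ≠ q ∧ x = s(p, q) := by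
  induction x using Sym2.ind with
  | _ p q => exact ⟨p, q, (H.mem_edgeSet.mp hx).ne, rfl⟩

lemma exists_mem_edge (hx : x ∈ H.edgeSet) : ∃ a, a ∈ x := by
  obtain ⟨p, q, _, h⟩ := exists_pts hx
  exact ⟨p, by rw [h]; exact Sym2.mem_mk_left p q⟩

lemma adj_other (hx : x ∈ H.edgeSet) (ha : a ∈ x) : H.Adj a (Sym2.Mem.other ha) := by
  rw [← H.mem_edgeSet, Sym2.other_spec ha]; exact hx

lemma reach_edge {K : SimpleGraph V} (hx : x ∈ K.edgeSet) (hb : b ∈ x) (hc : c ∈ x) :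
    K.Reachable b c := by
  induction x using Sym2.ind with
  | _ p q =>
    have hadj : K.Adj p q := K.mem_edgeSet.mp hx
    rw [Sym2.mem_iff] at hb hc
    rcases hb with rfl | rfl <;> rcases hc with rfl | rfl
    exacts [Reachable.refl _, hadj.reachable, hadj.symm.reachable, Reachable.refl _]

lemma mem_support_of_edge (hx : x ∈ H.edgeSet) (ha : a ∈ x) : a ∈ H.support := by
  induction x using Sym2.ind with
  | _ p q =>
    have hadj : H.Adj p q := H.mem_edgeSet.mp hx
    rw [Sym2.mem_iff] at ha
    rcases ha with rfl | rfl
    exacts [⟨q, hadj⟩, ⟨p, hadj.symm⟩]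

lemma pts_mem_support {K : SimpleGraph V} {w : K.Walk a b} (hg : x ∈ w.edges) (hu : u ∈ x) :
    u ∈ w.support := by
  induction x using Sym2.ind with
  | _ p q =>
    rw [Sym2.mem_iff] at hu
    rcases hu with rfl | rfl
    exacts [w.fst_mem_support_of_mem_edges hg, w.snd_mem_support_of_mem_edges hg]

lemma exists_support_of_edge {K : SimpleGraph V} {w : K.Walk a b} (hg : x ∈ w.edges) :
    ∃ u ∈ x, u ∈ w.support := by
  induction x using Sym2.ind with
  | _ p q => exact ⟨p, Sym2.mem_mk_left p q, w.fst_mem_support_of_mem_edges hg⟩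

/-- From betweenness to separation. -/
lemma sep_of_between (he : e ∈ H.edgeSet) (hf : f ∈ H.edgeSet)
    (hg : g ∈ edgesBetween H e f) : Sep H g e f := by
  intro a ha b hb hr
  obtain ⟨u0⟩ := hr
  have hsub : ∀ e' ∈ u0.edges, e' ∈ H.edgeSet := by
    intro e' he'
    have h' := u0.edges_subset_edgeSet he'
    rw [edgeSet_deleteEdges] at h'
    exact h'.1
  have hgu : g ∉ u0.edges := by
    intro hmem
    have h' := u0.edges_subset_edgeSet hmem
    rw [edgeSet_deleteEdges] at h'
    exact h'.2 rfl
  have hadj_a : H.Adj a (Sym2.Mem.other ha) := adj_other he ha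
  have hadj_b : H.Adj b (Sym2.Mem.other hb) := adj_other hf hb
  set w : H.Walk (Sym2.Mem.other ha) (Sym2.Mem.other hb) :=
    SimpleGraph.Walk.cons hadj_a.symm
      ((u0.transfer H hsub).append (SimpleGraph.Walk.cons hadj_b SimpleGraph.Walk.nil)) with hw
  have hea : s(Sym2.Mem.other ha, a) = e := by rw [Sym2.eq_swap]; exact Sym2.other_spec ha
  have hfb : s(b, Sym2.Mem.other hb) = f := Sym2.other_spec hb
  have hew : e ∈ w.edges := by
    rw [hw, SimpleGraph.Walk.edges_cons, hea]
    exact List.mem_cons_self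
  have hfw : f ∈ w.edges := by
    rw [hw, SimpleGraph.Walk.edges_cons, SimpleGraph.Walk.edges_append]
    refine List.mem_cons_of_mem _ (List.mem_append.mpr (Or.inr ?_))
    rw [SimpleGraph.Walk.edges_cons, hfb]
    exact List.mem_cons_self
  have hgw := hg.2.2.2 _ _ w hew hfw
  rw [hw, SimpleGraph.Walk.edges_cons] at hgw
  rcases List.mem_cons.mp hgw with h' | h'
  · exact hg.2.1 (h'.trans hea)
  · rw [SimpleGraph.Walk.edges_append] at h'
    rcases List.mem_append.mp h' with h'' | h''
    · rw [SimpleGraph.Walk.edges_transfer] at h''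
      exact hgu h''
    · rw [SimpleGraph.Walk.edges_cons] at h''
      rcases List.mem_cons.mp h'' with h3 | h3
      · exact hg.2.2.1 (h3.trans hfb)
      · simp at h3

/-- From separation to betweenness. -/
lemma between_of_sep (hgE : g ∈ H.edgeSet) (hge : g ≠ e) (hgf : g ≠ f)
    (hsep : Sep H g e f) : g ∈ edgesBetween H e f := by
  classical
  refine ⟨hgE, hge, hgf, ?_⟩
  intro a b w hew hfw
  by_contra hgw
  obtain ⟨p, hpe, hps⟩ := exists_support_of_edge hew
  obtain ⟨q, hqf, hqs⟩ := exists_support_of_edge hfw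
  have hsub : ∀ e' ∈ w.edges, e' ∈ (H.deleteEdges {g}).edgeSet := by
    intro e' he'
    rw [edgeSet_deleteEdges]
    exact ⟨w.edges_subset_edgeSet he', by rintro rfl; exact hgw he'⟩
  set w' := w.transfer (H.deleteEdges {g}) hsub with hw'
  have hsup : w'.support = w.support := SimpleGraph.Walk.support_transfer _ _
  exact hsep p hpe q hqf
    ((reach_of_support w' (hsup ▸ hps)).symm.trans (reach_of_support w' (hsup ▸ hqs)))

/-- F1: a separator of `e` and `f` separates `e` from `y` or `y` from `f`. -/
lemma sep_split (hsep : Sep H g e f) (hyE : y ∈ H.edgeSet) (hyg : y ≠ g) :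
    Sep H g e y ∨ Sep H g y f := by
  by_contra hcon
  rw [not_or] at hcon
  obtain ⟨h1, h2⟩ := hcon
  simp only [Sep, not_forall, not_not] at h1 h2
  obtain ⟨a, ha, b, hb, hr1⟩ := h1
  obtain ⟨c', hc, d, hd, hr2⟩ := h2
  have hyE' : y ∈ (H.deleteEdges {g}).edgeSet := by
    rw [edgeSet_deleteEdges]; exact ⟨hyE, by simpa using hyg⟩
  exact hsep a ha d hd (hr1.trans ((reach_edge hyE' hb hc).trans hr2))

/-- F3: transitivity of separation along a chain. -/
lemma sep_trans (h1 : Sep H k e x) (h2 : Sep H x e f) (hxk : x ≠ k)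
    (hxE : x ∈ H.edgeSet) : Sep H k e f := by
  classical
  intro a ha c hc hr
  obtain ⟨w⟩ := hr
  by_cases hx : x ∈ w.edges
  · obtain ⟨u', hux, hus⟩ := exists_support_of_edge hx
    exact h1 a ha u' hux (reach_of_support w hus)
  · refine h2 a ha c hc ⟨w.transfer _ ?_⟩
    intro e' he'
    rw [edgeSet_deleteEdges]
    have h' := w.edges_subset_edgeSet he'
    rw [edgeSet_deleteEdges] at h'
    exact ⟨h'.1, by rintro rfl; exact hx he'⟩

lemma length_takeUntil_lt [DecidableEq V] {K : SimpleGraph V} (w : K.Walk a c)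
    (hus : u ∈ w.support) (huc : u ≠ c) : (w.takeUntil u hus).length < w.length := by
  have hle := w.length_takeUntil_le hus
  rcases lt_or_eq_of_le hle with h | h
  · exact h
  · exfalso
    have hspec := w.take_spec hus
    have hlen : (w.takeUntil u hus).length + (w.dropUntil u hus).length = w.length := by
      rw [← SimpleGraph.Walk.length_append, hspec]
    have h0 : (w.dropUntil u hus).length = 0 := by omega
    exact huc (SimpleGraph.Walk.eq_of_length_eq_zero h0)

/-- F2: two edges cannot separate each other from `e`. -/
lemma sep_antisym (hxE : x ∈ H.edgeSet) (hyE : y ∈ H.edgeSet)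
    (h1 : Sep H x e y) (h2 : Sep H y e x) (ha : a ∈ e)
    {c : V} (hc : c ∈ x ∨ c ∈ y) (hr : H.Reachable a c) : False := by
  classical
  obtain ⟨w⟩ := hr
  have key : ∀ n : ℕ, ∀ c : V, (c ∈ x ∨ c ∈ y) → ∀ w : H.Walk a c, w.length ≤ n → False := by
    intro n
    induction n using Nat.strong_induction_on with
    | _ n ih =>
      intro c hc w hw
      rcases hc with hc | hc
      · by_cases hy : y ∈ w.edges
        · obtain ⟨p, q, hpq, hy'⟩ := exists_pts hyE
          obtain ⟨u', hu, huc⟩ : ∃ u', u' ∈ y ∧ u' ≠ c := by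
            rcases eq_or_ne p c with rfl | hpc
            · exact ⟨q, by rw [hy']; exact Sym2.mem_mk_right p q,
                fun h => hpq (h.symm ▸ rfl)⟩
            · exact ⟨p, by rw [hy']; exact Sym2.mem_mk_left p q, hpc⟩
          have hus : u' ∈ w.support := pts_mem_support hy hu
          have hlt : (w.takeUntil u' hus).length < w.length := length_takeUntil_lt w hus huc
          exact ih (w.takeUntil u' hus).length (lt_of_lt_of_le hlt hw) u' (Or.inr hu)
            (w.takeUntil u' hus) le_rfl
        · exact h2 a ha c hc (reach_del_of_walk w hy)
      · by_cases hx : x ∈ w.edges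
        · obtain ⟨p, q, hpq, hx'⟩ := exists_pts hxE
          obtain ⟨u', hu, huc⟩ : ∃ u', u' ∈ x ∧ u' ≠ c := by
            rcases eq_or_ne p c with rfl | hpc
            · exact ⟨q, by rw [hx']; exact Sym2.mem_mk_right p q,
                fun h => hpq (h.symm ▸ rfl)⟩
            · exact ⟨p, by rw [hx']; exact Sym2.mem_mk_left p q, hpc⟩
          have hus : u' ∈ w.support := pts_mem_support hx hu
          have hlt : (w.takeUntil u' hus).length < w.length := length_takeUntil_lt w hus huc
          exact ih (w.takeUntil u' hus).length (lt_of_lt_of_le hlt hw) u' (Or.inl hu)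
            (w.takeUntil u' hus) le_rfl
        · exact h1 a ha c hc (reach_del_of_walk w hx)
  exact key w.length c hc w le_rfl

/-! ### Reachability in a one-vertex union -/

def Reach2 (H1 H2 : SimpleGraph V) (v a b : V) : Prop :=
  H1.Reachable a b ∨ H2.Reachable a b ∨ (H1.Reachable a v ∧ H2.Reachable v b) ∨
    (H2.Reachable a v ∧ H1.Reachable v b)

lemma reach2_comm {v a b : V} (h : Reach2 H1 H2 v a b) : Reach2 H2 H1 v a b := by
  unfold Reach2 at h ⊢; tauto

lemma mem_support_of_reachable (h : H.Reachable a b) (hab : a ≠ b) :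
    a ∈ H.support ∧ b ∈ H.support := by
  obtain ⟨w⟩ := h
  induction w with
  | nil => exact absurd rfl hab
  | @cons u u' u'' hadj p ih =>
    refine ⟨⟨_, hadj⟩, ?_⟩
    rcases eq_or_ne u' u'' with rfl | hne
    · exact ⟨_, hadj.symm⟩
    · exact (ih hne).2

lemma reach2_step {v a b c : V} (hs : H1.support ∩ H2.support ⊆ {v}) (hadj : H1.Adj a c)
    (h : Reach2 H1 H2 v c b) : Reach2 H1 H2 v a b := by
  rcases h with h | h | ⟨hcv, hvb⟩ | ⟨hcv, hvb⟩
  · exact Or.inl (hadj.reachable.trans h)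
  · rcases eq_or_ne c b with rfl | hcb
    · exact Or.inl hadj.reachable
    · have hc2 := (mem_support_of_reachable h hcb).1
      have hc1 : c ∈ H1.support := ⟨a, hadj.symm⟩
      have hcv : c = v := hs ⟨hc1, hc2⟩
      subst hcv
      exact Or.inr (Or.inr (Or.inl ⟨hadj.reachable, h⟩))
  · exact Or.inr (Or.inr (Or.inl ⟨hadj.reachable.trans hcv, hvb⟩))
  · rcases eq_or_ne c v with rfl | hcv'
    · exact Or.inl (hadj.reachable.trans hvb)
    · have hc2 := (mem_support_of_reachable hcv hcv').1
      have hc1 : c ∈ H1.support := ⟨a, hadj.symm⟩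
      exact absurd (hs ⟨hc1, hc2⟩) hcv'

lemma reach_sup_decomp {v a b : V} (hs : H1.support ∩ H2.support ⊆ {v})
    (h : (H1 ⊔ H2).Reachable a b) : Reach2 H1 H2 v a b := by
  obtain ⟨w⟩ := h
  induction w with
  | nil => exact Or.inl (Reachable.refl _)
  | @cons u u' u'' hadj p ih =>
    have hadj' : H1.Adj u u' ∨ H2.Adj u u' := hadj
    rcases hadj' with h1 | h2
    · exact reach2_step hs h1 ih
    · refine reach2_comm (reach2_step ?_ h2 (reach2_comm ih))
      rw [Set.inter_comm]; exact hs

lemma deleteEdges_sup_eq (s : Set (Sym2 V)) :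
    (H1 ⊔ H2).deleteEdges s = H1.deleteEdges s ⊔ H2.deleteEdges s := by
  ext a b
  simp only [deleteEdges_adj, sup_adj]
  tauto

/-! ### Lifting walks to the induced graph on the support -/

def liftWalk {s : Set V} :
    ∀ {a b : V} (w : H.Walk a b) (hw : ∀ x ∈ w.support, x ∈ s),
      (H.induce s).Walk ⟨a, hw a w.start_mem_support⟩ ⟨b, hw b w.end_mem_support⟩
  | _, _, SimpleGraph.Walk.nil, _ => SimpleGraph.Walk.nil
  | _, _, SimpleGraph.Walk.cons h p, hw =>
      SimpleGraph.Walk.cons (by exact h)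
        (liftWalk p fun x hx => hw x (by
          rw [SimpleGraph.Walk.support_cons]
          exact List.mem_cons_of_mem _ hx))

lemma liftWalk_support {s : Set V} :
    ∀ {a b : V} (w : H.Walk a b) (hw : ∀ x ∈ w.support, x ∈ s),
      (liftWalk w hw).support.map Subtype.val = w.support
  | _, _, SimpleGraph.Walk.nil, _ => by simp [liftWalk]
  | _, _, SimpleGraph.Walk.cons h p, hw => by
      exact congrArg (List.cons _) (liftWalk_support p _)

lemma liftWalk_edges {s : Set V} :
    ∀ {a b : V} (w : H.Walk a b) (hw : ∀ x ∈ w.support, x ∈ s),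
      (liftWalk w hw).edges.map (Sym2.map Subtype.val) = w.edges
  | _, _, SimpleGraph.Walk.nil, _ => by simp [liftWalk]
  | _, _, SimpleGraph.Walk.cons h p, hw => by
      exact congrArg (List.cons _) (liftWalk_edges p _)

lemma liftWalk_isPath {s : Set V} {a b : V} {w : H.Walk a b}
    (hw : ∀ x ∈ w.support, x ∈ s) (hp : w.IsPath) : (liftWalk w hw).IsPath := by
  rw [SimpleGraph.Walk.isPath_def] at hp ⊢
  have h := liftWalk_support w hw
  rw [← h] at hp
  exact hp.of_map

lemma support_subset_graph_support :
    ∀ {a b : V} (w : H.Walk a b) (_ : a ∈ H.support), ∀ x ∈ w.support, x ∈ H.support := by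
  intro a b w
  induction w with
  | nil =>
    intro ha x hx
    rw [SimpleGraph.Walk.support_nil, List.mem_singleton] at hx
    exact hx ▸ ha
  | @cons t t' t'' h p ih =>
    intro ha x hx
    rw [SimpleGraph.Walk.support_cons] at hx
    rcases List.mem_cons.mp hx with rfl | hx
    · exact ha
    · exact ih ⟨_, h.symm⟩ x hx

/-- In a graph whose support induces a tree, the first edge of a path from `v`
separates `v` from the endpoint. -/
lemma exists_first_edge {y' : V} (h2t : (H.induce H.support).IsTree)
    (hv : v ∈ H.support) (hy : y' ∈ H.support) (hvy : v ≠ y') :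
    ∃ c, H.Adj v c ∧ ¬ (H.deleteEdges {s(v, c)}).Reachable v y' := by
  classical
  have hreach : H.Reachable v y' := by
    have h := h2t.isConnected.preconnected ⟨v, hv⟩ ⟨y', hy⟩
    exact h.map (⟨Subtype.val, fun {x y} h => h⟩ : (H.induce H.support) →g H)
  obtain ⟨w0⟩ := hreach
  set p0 : H.Walk v y' := w0.bypass with hp0
  have hp0path : p0.IsPath := SimpleGraph.Walk.bypass_isPath _
  obtain ⟨c, hadj, ptail, hcons⟩ := SimpleGraph.Walk.exists_eq_cons_of_ne hvy p0
  refine ⟨c, hadj, ?_⟩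
  rintro ⟨u0⟩
  have hsub : ∀ e' ∈ u0.edges, e' ∈ H.edgeSet := by
    intro e' he'
    have h' := u0.edges_subset_edgeSet he'
    rw [edgeSet_deleteEdges] at h'
    exact h'.1
  have hg2u0 : s(v, c) ∉ u0.edges := by
    intro hmem
    have h' := u0.edges_subset_edgeSet hmem
    rw [edgeSet_deleteEdges] at h'
    exact h'.2 rfl
  set u1 : H.Walk v y' := (u0.transfer H hsub).bypass with hu1
  have hu1path : u1.IsPath := SimpleGraph.Walk.bypass_isPath _
  have hu1edges : u1.edges ⊆ u0.edges := by
    intro e' he'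
    have h' := SimpleGraph.Walk.edges_bypass_subset _ he'
    rwa [SimpleGraph.Walk.edges_transfer] at h'
  have hg2u1 : s(v, c) ∉ u1.edges := fun h => hg2u0 (hu1edges h)
  have hg2p0 : s(v, c) ∈ p0.edges := by
    rw [hcons, SimpleGraph.Walk.edges_cons]
    exact List.mem_cons_self
  have hs1 : ∀ x ∈ p0.support, x ∈ H.support := support_subset_graph_support p0 hv
  have hs2 : ∀ x ∈ u1.support, x ∈ H.support := support_subset_graph_support u1 hv
  have hpath1 : (liftWalk p0 hs1).IsPath := liftWalk_isPath hs1 hp0path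
  have hpath2 : (liftWalk u1 hs2).IsPath := liftWalk_isPath hs2 hu1path
  have hEq := h2t.IsAcyclic.path_unique ⟨liftWalk p0 hs1, hpath1⟩ ⟨liftWalk u1 hs2, hpath2⟩
  have hwEq : liftWalk p0 hs1 = liftWalk u1 hs2 := congrArg Subtype.val hEq
  have hedges : p0.edges = u1.edges := by
    rw [← liftWalk_edges p0 hs1, ← liftWalk_edges u1 hs2, hwEq]
  rw [hedges] at hg2p0
  exact hg2u1 hg2p0

/-! ### The spine characterization (sufficient condition) -/

lemma reach_between_edges (hconn : (H.induce H.support).Connected)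
    (hx : x ∈ H.edgeSet) (ha : a ∈ x) {c : V} (hy : y ∈ H.edgeSet) (hc : c ∈ y) :
    H.Reachable a c := by
  have h := hconn.preconnected ⟨a, mem_support_of_edge hx ha⟩ ⟨c, mem_support_of_edge hy hc⟩
  exact h.map (⟨Subtype.val, fun {x y} h => h⟩ : (H.induce H.support) →g H)

lemma spine_reach [Fintype V] {H : SimpleGraph V} {r : Sym2 V → ℕ}
    (hconn : (H.induce H.support).Connected) (hinj : Set.InjOn r H.edgeSet) :
    ∀ n (e f : Sym2 V), r f - r e ≤ n → e ∈ H.edgeSet → f ∈ H.edgeSet → r e < r f →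
      (∀ g ∈ edgesBetween H e f, r g < r f) →
      Relation.ReflTransGen (IsParent H r) e f := by
  intro n
  induction n using Nat.strong_induction_on with
  | _ n ih =>
    intro e f hn he hf hef hB
    classical
    obtain ⟨ae, hae⟩ := exists_mem_edge he
    set T : Set (Sym2 V) :=
      {h | h ∈ H.edgeSet ∧ r e < r h ∧ (h = f ∨ h ∈ edgesBetween H e f)} with hTdef
    have hfT : f ∈ T := ⟨hf, hef, Or.inl rfl⟩
    obtain ⟨h0, hh0T, hh0min⟩ :=
      Set.exists_min_image T (fun h => (edgesBetween H e h ∩ T).ncard)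
        (Set.toFinite T) ⟨f, hfT⟩
    obtain ⟨h0E, h0rank, h0pos⟩ := hh0T
    have hh0T' : h0 ∈ T := ⟨h0E, h0rank, h0pos⟩
    -- no candidate lies strictly between `e` and `h0`
    have hempty : ∀ g', g' ∈ edgesBetween H e h0 → g' ∉ T := by
      intro g' hgB hgT
      have hsub : edgesBetween H e g' ∩ T ⊆ edgesBetween H e h0 ∩ T := by
        rintro k' ⟨hkB, hkT⟩
        have hkh0 : k' ≠ h0 := by
          rintro rfl
          obtain ⟨ch, hch⟩ := exists_mem_edge h0E
          exact sep_antisym h0E hgT.1 (sep_of_between he hgT.1 hkB)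
            (sep_of_between he h0E hgB) hae (Or.inl hch)
            (reach_between_edges hconn he hae h0E hch)
        exact ⟨between_of_sep hkB.1 hkB.2.1 hkh0
          (sep_trans (sep_of_between he hgT.1 hkB) (sep_of_between he h0E hgB)
            (Ne.symm hkB.2.2.1) hgT.1), hkT⟩
      have hg_in : g' ∈ edgesBetween H e h0 ∩ T := ⟨hgB, hgT⟩
      have hg_not : g' ∉ edgesBetween H e g' ∩ T := fun h => h.1.2.2.1 rfl
      have hss : edgesBetween H e g' ∩ T ⊂ edgesBetween H e h0 ∩ T :=
        (Set.ssubset_iff_of_subset hsub).mpr ⟨g', hg_in, hg_not⟩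
      have hlt := Set.ncard_lt_ncard hss (Set.toFinite _)
      exact absurd (hh0min g' hgT) (not_le.mpr hlt)
    -- `h0` is an adjacent superior of `e`
    have hS : AdjSup H r e h0 := by
      refine ⟨h0E, h0rank, ?_⟩
      intro g' hgB
      by_contra hge
      push_neg at hge
      have hne : g' ≠ e := hgB.2.1
      have hgt : r e < r g' := lt_of_le_of_ne hge fun h => hne (hinj hgB.1 he h.symm)
      have hgT : g' ∈ T := by
        refine ⟨hgB.1, hgt, ?_⟩
        rcases h0pos with rfl | h0B
        · exact Or.inr hgB
        · rcases eq_or_ne g' f with rfl | hgf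
          · exact Or.inl rfl
          · exact Or.inr (between_of_sep hgB.1 hne hgf
              (sep_trans (sep_of_between he h0E hgB) (sep_of_between he hf h0B)
                (Ne.symm hgB.2.2.1) h0E))
      exact hempty g' hgB hgT
    -- take the minimum-rank adjacent superior: it is the parent
    obtain ⟨p, hpS, hpmin⟩ :=
      Set.exists_min_image {h | AdjSup H r e h} r (Set.toFinite _) ⟨h0, hS⟩
    have hparent : IsParent H r e p := ⟨hpS, fun g' hg' => hpmin g' hg'⟩
    have hrp_le : r p ≤ r h0 := hpmin h0 hS
    have hh0f : r h0 ≤ r f := by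
      rcases h0pos with rfl | h0B
      · exact le_refl _
      · exact le_of_lt (hB h0 h0B)
    rcases eq_or_ne p f with rfl | hpf
    · exact Relation.ReflTransGen.single hparent
    · have hrpf : r p < r f :=
        lt_of_le_of_ne (hrp_le.trans hh0f) fun h => hpf (hinj hpS.1 hf h)
      have hBp : ∀ g' ∈ edgesBetween H p f, r g' < r f := by
        intro g' hg'
        rcases eq_or_ne g' e with rfl | hge
        · exact hef
        · have hsep : Sep H g' p f := sep_of_between hpS.1 hf hg'
          rcases sep_split hsep he (Ne.symm hge) with hsep1 | hsep2
          · have hmem : g' ∈ edgesBetween H e p :=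
              between_of_sep hg'.1 hge hg'.2.1 hsep1.symm
            exact lt_trans (hpS.2.2 g' hmem) (lt_trans hpS.2.1 hrpf)
          · exact hB g' (between_of_sep hg'.1 hge hg'.2.2.1 hsep2)
      have hmeas : r f - r p < n :=
        lt_of_lt_of_le (Nat.sub_lt_sub_left hef hpS.2.1) hn
      exact Relation.ReflTransGen.head hparent
        (ih (r f - r p) hmeas p f le_rfl hpS.1 hf hrpf hBp)

/-! ### Transfer of separation between the pieces and the union -/

lemma sep_G_of_sep_G1 {G1 G2 : SimpleGraph V} {v : V} {g e f : Sym2 V}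
    (hsupp : G1.support ∩ G2.support ⊆ {v})
    (he : e ∈ G1.edgeSet) (hf : f ∈ G1.edgeSet)
    (hsep : Sep G1 g e f) : Sep (G1 ⊔ G2) g e f := by
  intro a ha b hb hrr
  rw [deleteEdges_sup_eq] at hrr
  have hs' : (G1.deleteEdges {g}).support ∩ (G2.deleteEdges {g}).support ⊆ {v} := by
    intro x hx
    exact hsupp ⟨support_mono (deleteEdges_le _) hx.1, support_mono (deleteEdges_le _) hx.2⟩
  have hd := reach_sup_decomp (v := v) hs' hrr
  have haG1 : a ∈ G1.support := mem_support_of_edge he ha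
  have hbG1 : b ∈ G1.support := mem_support_of_edge hf hb
  rcases hd with h | h | ⟨h1', h2'⟩ | ⟨h2', h1'⟩
  · exact hsep a ha b hb h
  · by_cases hab : a = b
    · exact hsep a ha b hb (hab ▸ Reachable.refl a)
    · have haG2 : a ∈ G2.support :=
        support_mono (deleteEdges_le _) (mem_support_of_reachable h hab).1
      have hbG2 : b ∈ G2.support :=
        support_mono (deleteEdges_le _) (mem_support_of_reachable h hab).2
      have hav : a = v := hsupp ⟨haG1, haG2⟩
      have hbv : b = v := hsupp ⟨hbG1, hbG2⟩
      exact hab (hav.trans hbv.symm)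
  · by_cases hvb : v = b
    · exact hsep a ha b hb (hvb ▸ h1')
    · have hbG2 : b ∈ G2.support :=
        support_mono (deleteEdges_le _) (mem_support_of_reachable h2' hvb).2
      exact hvb (hsupp ⟨hbG1, hbG2⟩).symm
  · by_cases hav : a = v
    · exact hsep a ha b hb (hav ▸ h1')
    · have haG2 : a ∈ G2.support :=
        support_mono (deleteEdges_le _) (mem_support_of_reachable h2' hav).1
      exact hav (hsupp ⟨haG1, haG2⟩)

lemma sep_G_of_key {G1 G2 : SimpleGraph V} {v : V} {g e f : Sym2 V}
    (hsupp : G1.support ∩ G2.support ⊆ {v})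
    (he : e ∈ G1.edgeSet) (hf : f ∈ G2.edgeSet)
    (hkey : ∀ b ∈ f, ¬ (G2.deleteEdges {g}).Reachable v b) :
    Sep (G1 ⊔ G2) g e f := by
  intro a ha b hb hrr
  rw [deleteEdges_sup_eq] at hrr
  have hs' : (G1.deleteEdges {g}).support ∩ (G2.deleteEdges {g}).support ⊆ {v} := by
    intro x hx
    exact hsupp ⟨support_mono (deleteEdges_le _) hx.1, support_mono (deleteEdges_le _) hx.2⟩
  have hd := reach_sup_decomp (v := v) hs' hrr
  have haG1 : a ∈ G1.support := mem_support_of_edge he ha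
  have hbG2 : b ∈ G2.support := mem_support_of_edge hf hb
  refine hkey b hb ?_
  rcases hd with h | h | ⟨h1', h2'⟩ | ⟨h2', h1'⟩
  · by_cases hab : a = b
    · have hbv : b = v := hsupp ⟨hab ▸ haG1, hbG2⟩
      rw [hbv]
    · have hbG1 : b ∈ G1.support :=
        support_mono (deleteEdges_le _) (mem_support_of_reachable h hab).2
      have hbv : b = v := hsupp ⟨hbG1, hbG2⟩
      rw [hbv]
  · by_cases hab : a = b
    · have hbv : b = v := hsupp ⟨hab ▸ haG1, hbG2⟩
      rw [hbv]
    · have haG2 : a ∈ G2.support :=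
        support_mono (deleteEdges_le _) (mem_support_of_reachable h hab).1
      have hav : a = v := hsupp ⟨haG1, haG2⟩
      rwa [hav] at h
  · exact h2'
  · by_cases hvb : v = b
    · rw [← hvb]
    · have hbG1 : b ∈ G1.support :=
        support_mono (deleteEdges_le _) (mem_support_of_reachable h1' hvb).2
      exact absurd (hsupp ⟨hbG1, hbG2⟩).symm hvb

lemma spine_mem_edgeSet {r : Sym2 V → ℕ} {e1 e : Sym2 V} (h1 : e1 ∈ H.edgeSet)
    (h : e ∈ spine H r e1) : e ∈ H.edgeSet := by
  induction h with
  | refl => exact h1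
  | tail _ hp _ => exact hp.1.1

/-- The main (one-sided) claim. -/
lemma main [Fintype V] (G1 G2 : SimpleGraph V) (v : V) (r : Sym2 V → ℕ) (e1s e2s : Sym2 V)
    (h2 : (G2.induce G2.support).IsTree)
    (hsupp : G1.support ∩ G2.support ⊆ {v})
    (hdisj : Disjoint G1.edgeSet G2.edgeSet)
    (hr : Set.InjOn r (G1 ⊔ G2).edgeSet)
    (he1 : e1s ∈ G1.edgeSet)
    (he2E : e2s ∈ G2.edgeSet) (hve2 : v ∈ e2s)
    (he2min : ∀ f ∈ G2.edgeSet, v ∈ f → r e2s ≤ r f) :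
    ∀ e ∈ spine G1 r e1s, ∀ f, AdjSup (G1 ⊔ G2) r e f → ¬ AdjSup G1 r e f →
      f ∈ spine G2 r e2s := by
  intro e hesp f hGs hn1
  have he : e ∈ G1.edgeSet := spine_mem_edgeSet he1 hesp
  have hfG : f ∈ G1.edgeSet ∪ G2.edgeSet := by rw [← edgeSet_sup]; exact hGs.1
  -- Step 1: f belongs to G2
  have hfG2 : f ∈ G2.edgeSet := by
    rcases hfG with hf1 | hf2
    · exfalso
      refine hn1 ⟨hf1, hGs.2.1, ?_⟩
      intro g hg
      refine hGs.2.2 g (between_of_sep ?_ hg.2.1 hg.2.2.1 ?_)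
      · rw [edgeSet_sup]; exact Or.inl hg.1
      · exact sep_G_of_sep_G1 hsupp he hf1 (sep_of_between he hf1 hg)
    · exact hf2
  rcases eq_or_ne f e2s with rfl | hfe2
  · exact Relation.ReflTransGen.refl
  -- Key (a): every edge between e2s and f in G2 has rank < r e
  have hga : ∀ g ∈ edgesBetween G2 e2s f, r g < r e := by
    intro g hg
    refine hGs.2.2 g (between_of_sep ?_ ?_ hg.2.2.1 ?_)
    · rw [edgeSet_sup]; exact Or.inr hg.1
    · rintro rfl; exact Set.disjoint_left.mp hdisj he hg.1
    · exact sep_G_of_key hsupp he hfG2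
        (fun b hb => sep_of_between he2E hfG2 hg v hve2 b hb)
  -- Key (b): r e2s < r f
  have hgb : r e2s < r f := by
    by_cases hvf : v ∈ f
    · refine lt_of_le_of_ne (he2min f hfG2 hvf) fun h => hfe2 ?_
      exact hr (by rw [edgeSet_sup]; exact Or.inr hfG2)
        (by rw [edgeSet_sup]; exact Or.inr he2E) h.symm
    · obtain ⟨yy, hyf⟩ := exists_mem_edge hfG2
      have hyS : yy ∈ G2.support := mem_support_of_edge hfG2 hyf
      have hvS : v ∈ G2.support := mem_support_of_edge he2E hve2
      have hvy : v ≠ yy := fun h => hvf (h ▸ hyf)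
      obtain ⟨cc, hadj, hnr⟩ := exists_first_edge h2 hvS hyS hvy
      have hg2E : s(v, cc) ∈ G2.edgeSet := G2.mem_edgeSet.mpr hadj
      have hvg2 : v ∈ s(v, cc) := Sym2.mem_mk_left v cc
      have hg2f : s(v, cc) ≠ f := fun h => hvf (h ▸ hvg2)
      have hkey : ∀ b ∈ f, ¬ (G2.deleteEdges {s(v, cc)}).Reachable v b := by
        intro b hb hrb
        refine hnr (hrb.trans (reach_edge ?_ hb hyf))
        rw [edgeSet_deleteEdges]
        exact ⟨hfG2, by simpa using hg2f.symm⟩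
      have hg2B : s(v, cc) ∈ edgesBetween (G1 ⊔ G2) e f := by
        refine between_of_sep ?_ ?_ hg2f (sep_G_of_key hsupp he hfG2 hkey)
        · rw [edgeSet_sup]; exact Or.inr hg2E
        · rintro h; exact Set.disjoint_left.mp hdisj he (h ▸ hg2E)
      calc r e2s ≤ r s(v, cc) := he2min _ hg2E hvg2
        _ < r e := hGs.2.2 _ hg2B
        _ < r f := hGs.2.1
  -- conclude via the spine characterization
  exact spine_reach h2.isConnected
    (hr.mono (by rw [edgeSet_sup]; exact Set.subset_union_right))
    (r f - r e2s) e2s f le_rfl he2E hfG2 hgb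
    (fun g hg => lt_trans (hga g hg) hGs.2.1)

end Stmt7Proof

/- Merge setting: `G1` and `G2` are finite trees (on their supports) over a
common ambient vertex type, sharing exactly the vertex `v` and no edges, so
`G1 ⊔ G2` is a tree. A single injective rank function `r` is given on the
edges of `G1 ⊔ G2`. `e1s` and `e2s` are the minimum-rank edges incident to
`v` in `G1` and `G2` respectively. -/

variable [Fintype V] (G1 G2 : SimpleGraph V) (v : V) (r : Sym2 V → ℕ)
  (e1s e2s : Sym2 V)

/-- Claim in the proof of Theorem 3.5: for `e ∈ spine1(e1*)`, every adjacent
superior of `e` in `G = G1 ⊔ G2` that is not an adjacent superior of `e` in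
`G1` belongs to `spine2(e2*)`; and symmetrically. -/
theorem stmt7
    (h1 : (G1.induce G1.support).IsTree) (h2 : (G2.induce G2.support).IsTree)
    (hne1 : G1.edgeSet.Nonempty) (hne2 : G2.edgeSet.Nonempty)
    (hsupp : G1.support ∩ G2.support = {v})
    (hdisj : Disjoint G1.edgeSet G2.edgeSet)
    (hr : Set.InjOn r (G1 ⊔ G2).edgeSet)
    (he1 : e1s ∈ G1.edgeSet ∧ v ∈ e1s ∧ ∀ f ∈ G1.edgeSet, v ∈ f → r e1s ≤ r f)
    (he2 : e2s ∈ G2.edgeSet ∧ v ∈ e2s ∧ ∀ f ∈ G2.edgeSet, v ∈ f → r e2s ≤ r f) :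
    (∀ e ∈ spine G1 r e1s, ∀ f, AdjSup (G1 ⊔ G2) r e f → ¬ AdjSup G1 r e f →
      f ∈ spine G2 r e2s) ∧
    (∀ e ∈ spine G2 r e2s, ∀ f, AdjSup (G1 ⊔ G2) r e f → ¬ AdjSup G2 r e f →
      f ∈ spine G1 r e1s) := by
  constructor
  · exact Stmt7Proof.main G1 G2 v r e1s e2s h2 (le_of_eq hsupp) hdisj hr
      he1.1 he2.1 he2.2.1 he2.2.2
  · intro e hesp f hsup hns
    have hr' : Set.InjOn r (G2 ⊔ G1).edgeSet := by rwa [sup_comm] at hr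
    exact Stmt7Proof.main G2 G1 v r e2s e1s h1
      (by rw [Set.inter_comm]; exact le_of_eq hsupp) hdisj.symm hr'
      he2.1 he1.1 he1.2.1 he1.2.2
      e hesp f (by rwa [sup_comm] at hsup) hns
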